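/- Let G = ⟨g, A⟩ where A is an abelian normal subgroup of index 2, g² ∈ A, and g acts on A by inversion (a^g = a^{-1} for all a ∈ A). If H is a non-normal subgroup of G, then H is not contained in A, and for a ∈ A, a ∈ N_G(H) if and only if a² ∈ H ∩ A. Consequently N_A(H)/(H∩A) is an elementary abelian 2-group. -/

import Mathlib

/-- Let `G = ⟨g, A⟩` with `A` abelian, normal of index 2, `g² ∈ A` and `g` inverting `A`.
If `H` is non-normal in `G`, then `H ⊄ A`; for `a ∈ A`, `a` normalizes `H` iff
`a² ∈ H ⊓ A`; hence `N_A(H)/(H ⊓ A)` is elementary abelian of exponent dividing 2. -/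
theorem normalizer_in_A_mod_H_elementary_abelian
    {G : Type*} [Group G] (A : Subgroup G) [A.Normal]
    (hab : ∀ a ∈ A, ∀ b ∈ A, a * b = b * a)
    (hidx : A.index = 2)
    (g : G) (hg2 : g ^ 2 ∈ A)
    (hinv : ∀ a ∈ A, g * a * g⁻¹ = a⁻¹)
    (hgen : Subgroup.closure {g} ⊔ A = ⊤)
    (H : Subgroup G) (hH : ¬ H.Normal) :
    ¬ H ≤ A ∧
      (∀ a ∈ A, a ∈ Subgroup.normalizer (H : Set G) ↔ a ^ 2 ∈ H ⊓ A) ∧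
      (∀ a ∈ Subgroup.normalizer (H : Set G) ⊓ A, a ^ 2 ∈ H ⊓ A) := by
  -- g is not in A
  have hgA : g ∉ A := by
    intro hg
    have h1 : Subgroup.closure {g} ≤ A :=
      (Subgroup.closure_le A).mpr (Set.singleton_subset_iff.mpr hg)
    have h2 : A = ⊤ := top_le_iff.mp (hgen ▸ sup_le h1 le_rfl)
    rw [h2, Subgroup.index_top] at hidx
    omega
  -- any element outside A inverts A by conjugation
  have key : ∀ x : G, x ∉ A → ∀ a ∈ A, x * a * x⁻¹ = a⁻¹ := by
    intro x hx a ha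
    have hk : g⁻¹ * x ∈ A := by
      rw [Subgroup.mul_mem_iff_of_index_two hidx]
      constructor
      · intro h; exact absurd (A.inv_mem_iff.mp h) hgA
      · intro h; exact absurd h hx
    have hcomm : (g⁻¹ * x) * a * (g⁻¹ * x)⁻¹ = a := by
      rw [hab _ hk _ ha]; group
    have e : x * a * x⁻¹ = g * ((g⁻¹ * x) * a * (g⁻¹ * x)⁻¹) * g⁻¹ := by group
    rw [e, hcomm, hinv a ha]
  -- H is not contained in A
  have hnsub : ¬ H ≤ A := by
    intro hle
    apply hH
    refine ⟨fun h hh n => ?_⟩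
    by_cases hn : n ∈ A
    · have : n * h * n⁻¹ = h := by rw [hab n hn h (hle hh)]; group
      rwa [this]
    · rw [key n hn h (hle hh)]; exact H.inv_mem hh
  obtain ⟨h0, h0H, h0A⟩ := SetLike.not_le_iff_exists.mp hnsub
  -- conjugation claim
  have claim : ∀ b ∈ A, b ^ 2 ∈ H → ∀ x ∈ H, b * x * b⁻¹ ∈ H := by
    intro b hb hb2 x hxH
    by_cases hx : x ∈ A
    · have : b * x * b⁻¹ = x := by rw [hab b hb x hx]; group
      rwa [this]
    · have e : b * x * b⁻¹ = b * (x * b⁻¹ * x⁻¹) * x := by group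
      have e2 : b * x * b⁻¹ = b ^ 2 * x := by
        rw [e, key x hx b⁻¹ (A.inv_mem hb), inv_inv, pow_two]
      rw [e2]; exact H.mul_mem hb2 hxH
  have main : ∀ a ∈ A, a ∈ Subgroup.normalizer (H : Set G) ↔ a ^ 2 ∈ H ⊓ A := by
    intro a ha
    constructor
    · intro han
      have hconj : a * h0 * a⁻¹ ∈ H :=
        (Subgroup.mem_normalizer_iff.mp han h0).mp h0H
      have e : (a * h0 * a⁻¹) * h0⁻¹ = a ^ 2 := by
        have e1 : (a * h0 * a⁻¹) * h0⁻¹ = a * (h0 * a⁻¹ * h0⁻¹) := by group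
        rw [e1, key h0 h0A a⁻¹ (A.inv_mem ha), inv_inv, ← pow_two]
      exact ⟨e ▸ H.mul_mem hconj (H.inv_mem h0H), A.pow_mem ha 2⟩
    · intro ⟨ha2H, _⟩
      rw [Subgroup.mem_normalizer_iff]
      intro x
      constructor
      · intro hx; exact claim a ha ha2H x hx
      · intro hx
        have h2 : a⁻¹ ^ 2 ∈ H := by
          rw [inv_pow]; exact H.inv_mem ha2H
        have := claim a⁻¹ (A.inv_mem ha) h2 _ hx
        have e : a⁻¹ * (a * x * a⁻¹) * a⁻¹⁻¹ = x := by group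
        rwa [e] at this
  refine ⟨hnsub, main, fun a ⟨han, haA⟩ => (main a haA).mp han⟩
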